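/- For all n ≥ 2, in the braid group B_{n+2} define σ_{n'} := σ_{n+1}σₙσ_{n+1} and Δ'_{n+1} := σ_{n'}(σ_{n-1}σ_{n'})(σ_{n-2}σ_{n-1}σ_{n'})⋯(σ₁σ₂⋯σ_{n-1}σ_{n'}). Then Δ'_{n+1} = Δ_{n+2} · σ₂σ₃⋯σₙ, where Δ_{n+2} is the Garside element of B_{n+2}. -/

import Mathlib

/-- The braid relations on `n` generators `σ₁,…,σₙ` (indexed by `Fin n`, where index
`i` stands for `σ_{i+1}`): the Artin presentation of the braid group `B_{n+1}`. -/
def braidRels (n : ℕ) : Set (FreeGroup (Fin n)) :=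
  {r | (∃ i j : Fin n, (i : ℕ) + 1 = (j : ℕ) ∧
        r = FreeGroup.of i * FreeGroup.of j * FreeGroup.of i *
            (FreeGroup.of j * FreeGroup.of i * FreeGroup.of j)⁻¹) ∨
       (∃ i j : Fin n, (i : ℕ) + 1 < (j : ℕ) ∧
        r = FreeGroup.of i * FreeGroup.of j * (FreeGroup.of j * FreeGroup.of i)⁻¹)}

/-- The braid group `B_{n+1}`, presented with `n` Artin generators. -/
def BraidGroup (n : ℕ) : Type := PresentedGroup (braidRels n)

instance (n : ℕ) : Group (BraidGroup n) := by unfold BraidGroup; infer_instance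

/-- The Artin generator `σᵢ` (1-based index `i`, with `σᵢ = 1` out of range). -/
def σ (n : ℕ) (i : ℕ) : BraidGroup n :=
  if h : i - 1 < n ∧ 1 ≤ i then PresentedGroup.of (⟨i - 1, h.1⟩ : Fin n) else 1

/-- The ascending product `σ_a σ_{a+1} ⋯ σ_b` in `B_{n+1}` (equal to `1` if `a > b`). -/
def asc (n : ℕ) (a b : ℕ) : BraidGroup n :=
  ((List.range' a (b + 1 - a)).map (σ n)).prod

/-- The Garside element `Δ_{n+1} = σₙ(σₙ₋₁σₙ)⋯(σ₁σ₂⋯σₙ)` of `B_{n+1}`. -/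
def Delta (n : ℕ) : BraidGroup n :=
  ((List.range n).map (fun k => asc n (n - k) n)).prod

/-- The element `Δ'_{n+1} = σ_{n'}(σ_{n-1}σ_{n'})(σ_{n-2}σ_{n-1}σ_{n'})⋯(σ₁⋯σ_{n-1}σ_{n'})`
of `B_{n+2}`, where `σ_{n'} = σ_{n+1}σₙσ_{n+1}`. -/
def DeltaPrime (n : ℕ) : BraidGroup (n + 1) :=
  ((List.range n).map
    (fun k => asc (n + 1) (n - k) (n - 1) *
      (σ (n + 1) (n + 1) * σ (n + 1) n * σ (n + 1) (n + 1)))).prod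

lemma rel_one {n : ℕ} {r : FreeGroup (Fin n)} (h : r ∈ braidRels n) :
    (PresentedGroup.mk (braidRels n) r : BraidGroup n) = 1 :=
  (QuotientGroup.eq_one_iff r).mpr (Subgroup.subset_normalClosure h)

lemma braid_rel (n i : ℕ) (h1 : 1 ≤ i) (h2 : i + 1 ≤ n) :
    σ n i * σ n (i+1) * σ n i = σ n (i+1) * σ n i * σ n (i+1) := by
  have hi : i - 1 < n ∧ 1 ≤ i := ⟨by omega, h1⟩
  have hj : (i+1) - 1 < n ∧ 1 ≤ i + 1 := ⟨by omega, by omega⟩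
  rw [σ, σ]; erw [dif_pos hi, dif_pos hj]
  set a : Fin n := ⟨i - 1, hi.1⟩
  set b : Fin n := ⟨(i+1) - 1, hj.1⟩
  have hr : (FreeGroup.of a * FreeGroup.of b * FreeGroup.of a *
      (FreeGroup.of b * FreeGroup.of a * FreeGroup.of b)⁻¹) ∈ braidRels n :=
    Or.inl ⟨a, b, by simp [a, b]; omega, rfl⟩
  have := rel_one hr
  simp only [map_mul, map_inv] at this
  have h2 := mul_inv_eq_one.mp this
  exact h2

lemma σ_one {n i : ℕ} (h : i = 0 ∨ n + 1 ≤ i) : σ n i = 1 := by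
  rw [σ]; erw [dif_neg]; omega

lemma comm_rel (n i j : ℕ) (h : i + 2 ≤ j) : σ n i * σ n j = σ n j * σ n i := by
  by_cases hi : 1 ≤ i ∧ j ≤ n
  · have hif : i - 1 < n ∧ 1 ≤ i := ⟨by omega, hi.1⟩
    have hjf : j - 1 < n ∧ 1 ≤ j := ⟨by omega, by omega⟩
    rw [σ, σ]; erw [dif_pos hif, dif_pos hjf]
    set a : Fin n := ⟨i - 1, hif.1⟩
    set b : Fin n := ⟨j - 1, hjf.1⟩
    have hr : (FreeGroup.of a * FreeGroup.of b *
        (FreeGroup.of b * FreeGroup.of a)⁻¹) ∈ braidRels n :=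
      Or.inr ⟨a, b, by simp [a, b]; omega, rfl⟩
    have := rel_one hr
    simp only [map_mul, map_inv] at this
    exact mul_inv_eq_one.mp this
  · rcases not_and_or.mp hi with h1 | h2
    · rw [σ_one (i := i) (by omega)]; group
    · rw [σ_one (i := j) (by omega)]; group

lemma asc_empty {n a b : ℕ} (h : b + 1 ≤ a) : asc n a b = 1 := by
  rw [asc]
  have : b + 1 - a = 0 := by omega
  rw [this]; simp

lemma asc_cons {n a b : ℕ} (h : a ≤ b) : asc n a b = σ n a * asc n (a+1) b := by
  rw [asc, asc]
  have h1 : b + 1 - a = (b + 1 - (a+1)) + 1 := by omega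
  rw [h1, List.range'_succ]
  simp

lemma asc_snoc {n a b : ℕ} (h : a ≤ b + 1) : asc n a (b+1) = asc n a b * σ n (b+1) := by
  rw [asc, asc]
  have h1 : b + 1 + 1 - a = (b + 1 - a) + 1 := by omega
  have h2 : a + 1 * (b + 1 - a) = b + 1 := by omega
  rw [h1, List.range'_concat, h2]
  simp

lemma asc_single (n a : ℕ) : asc n a a = σ n a := by
  rw [asc]; simp

-- σ_i commutes with the run σ_a σ_{a+1} ⋯ when i + 2 ≤ a
lemma comm_run (n i a len : ℕ) (h : i + 2 ≤ a) :
    σ n i * ((List.range' a len).map (σ n)).prod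
      = ((List.range' a len).map (σ n)).prod * σ n i := by
  induction len generalizing a with
  | zero => simp
  | succ m ih =>
    rw [List.range'_succ]
    simp only [List.map_cons, List.prod_cons]
    rw [← mul_assoc, comm_rel n i a h, mul_assoc, ih (a+1) (by omega), ← mul_assoc]

lemma comm_asc (n i a b : ℕ) (h : i + 2 ≤ a) :
    σ n i * asc n a b = asc n a b * σ n i := by
  rw [asc]; exact comm_run n i a _ h

lemma slide (n i j m : ℕ) (h1 : 1 ≤ i) (h2 : i ≤ j) (h3 : j + 1 ≤ m) (h4 : m ≤ n) :
    σ n (j+1) * asc n i m = asc n i m * σ n j := by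
  rcases eq_or_lt_of_le h2 with rfl | hij
  · -- j = i
    rw [asc_cons (by omega : i ≤ m), asc_cons (show i + 1 ≤ m by omega)]
    have key := comm_asc n i (i+1+1) m (by omega)
    calc σ n (i+1) * (σ n i * (σ n (i+1) * asc n (i+1+1) m))
        = (σ n (i+1) * σ n i * σ n (i+1)) * asc n (i+1+1) m := by group
      _ = (σ n i * σ n (i+1) * σ n i) * asc n (i+1+1) m := by
            rw [braid_rel n i h1 (by omega)]
      _ = (σ n i * σ n (i+1)) * (σ n i * asc n (i+1+1) m) := by group
      _ = (σ n i * σ n (i+1)) * (asc n (i+1+1) m * σ n i) := by rw [key]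
      _ = σ n i * (σ n (i+1) * asc n (i+1+1) m) * σ n i := by group
  · rw [asc_cons (show i ≤ m by omega), ← mul_assoc,
      ← comm_rel n i (j+1) (by omega), mul_assoc,
      slide n (i+1) j m (by omega) (by omega) h3 h4, ← mul_assoc]
termination_by j - i

lemma slide_asc (n c a b m : ℕ) (h1 : 1 ≤ c) (h2 : c ≤ a) (h3 : b + 1 ≤ m) (h4 : m ≤ n) :
    asc n (a+1) (b+1) * asc n c m = asc n c m * asc n a b := by
  by_cases hab : a ≤ b
  · rw [asc_cons (show a+1 ≤ b+1 by omega), asc_cons hab, mul_assoc,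
      slide_asc n c (a+1) b m h1 (by omega) h3 h4, ← mul_assoc,
      slide n c a m h1 h2 (by omega) h4, mul_assoc]
  · rw [asc_empty (show b + 1 + 1 ≤ a + 1 by omega), asc_empty (show b + 1 ≤ a by omega)]
    group
termination_by b + 1 - a

lemma T1 (n : ℕ) : ∀ p, 1 ≤ p → p ≤ n →
    ((List.range p).map (fun k => asc (n+1) (n-k) (n+1) * σ (n+1) n)).prod
    = ((List.range p).map (fun k => asc (n+1) (n-k) (n+1))).prod * asc (n+1) (n-p+1) n := by
  intro p
  induction p with
  | zero => exact fun h _ => absurd h (by norm_num)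
  | succ q ih =>
    intro _ hpn
    rcases Nat.eq_zero_or_pos q with rfl | hq
    · rw [show List.range 1 = [0] from rfl]
      simp only [List.map_cons, List.map_nil, List.prod_cons, List.prod_nil,
        mul_one, Nat.sub_zero]
      rw [show n - 1 + 1 = n from by omega, asc_single]
    · have ihq := ih (by omega) (by omega)
      rw [show List.range (q+1) = List.range q ++ [q] from List.range_succ,
        List.map_append, List.map_append, List.prod_append, List.prod_append]
      simp only [List.map_cons, List.map_nil, List.prod_cons, List.prod_nil, mul_one]
      rw [ihq]
      set P := ((List.range q).map (fun k => asc (n+1) (n-k) (n+1))).prod with hP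
      have key : asc (n+1) (n-q+1) n * asc (n+1) (n-q) (n+1)
          = asc (n+1) (n-q) (n+1) * asc (n+1) (n-q) (n-1) := by
        have := slide_asc (n+1) (n-q) (n-q) (n-1) (n+1) (by omega) le_rfl (by omega) le_rfl
        rwa [show n - 1 + 1 = n from by omega] at this
      have key2 : asc (n+1) (n-q) (n-1) * σ (n+1) n = asc (n+1) (n-q) n := by
        have := asc_snoc (n := n+1) (a := n-q) (b := n-1) (by omega)
        rw [show n - 1 + 1 = n from by omega] at this
        exact this.symm
      rw [show n - (q+1) + 1 = n - q from by omega]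
      calc P * asc (n+1) (n-q+1) n * (asc (n+1) (n-q) (n+1) * σ (n+1) n)
          = P * (asc (n+1) (n-q+1) n * asc (n+1) (n-q) (n+1)) * σ (n+1) n := by group
        _ = P * (asc (n+1) (n-q) (n+1) * asc (n+1) (n-q) (n-1)) * σ (n+1) n := by rw [key]
        _ = P * asc (n+1) (n-q) (n+1) * (asc (n+1) (n-q) (n-1) * σ (n+1) n) := by group
        _ = P * asc (n+1) (n-q) (n+1) * asc (n+1) (n-q) n := by rw [key2]

lemma T2 (n : ℕ) : ∀ p, p ≤ n →
    σ (n+1) (n+1) * ((List.range p).map (fun k => asc (n+1) (n-k) (n+1))).prod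
    = ((List.range p).map (fun k => asc (n+1) (n-k) (n+1))).prod * σ (n+1) (n+1-p) := by
  intro p
  induction p with
  | zero => simp
  | succ q ih =>
    intro hpn
    rw [show List.range (q+1) = List.range q ++ [q] from List.range_succ,
      List.map_append, List.prod_append]
    simp only [List.map_cons, List.map_nil, List.prod_cons, List.prod_nil, mul_one]
    rw [← mul_assoc, ih (by omega), mul_assoc]
    have key : σ (n+1) (n+1-q) * asc (n+1) (n-q) (n+1)
        = asc (n+1) (n-q) (n+1) * σ (n+1) (n-q) := by
      have := slide (n+1) (n-q) (n-q) (n+1) (by omega) le_rfl (by omega) le_rfl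
      rwa [show n - q + 1 = n + 1 - q from by omega] at this
    rw [key, show n + 1 - (q+1) = n - q from by omega, ← mul_assoc]


/-- For `n ≥ 2`, in `B_{n+2}` one has `Δ'_{n+1} = Δ_{n+2} ⬝ σ₂σ₃⋯σₙ`. -/
theorem deltaPrime_eq (n : ℕ) (hn : 2 ≤ n) :
    DeltaPrime n = Delta (n + 1) * asc (n + 1) 2 n := by
  have hterm : (fun k => asc (n + 1) (n - k) (n - 1) *
      (σ (n + 1) (n + 1) * σ (n + 1) n * σ (n + 1) (n + 1)))
      = (fun k => asc (n+1) (n-k) (n+1) * σ (n+1) n) := by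
    funext k
    have hb := braid_rel (n+1) n (by omega) (by omega)
    have e1 : asc (n+1) (n-k) (n+1) = asc (n+1) (n-k) n * σ (n+1) (n+1) :=
      asc_snoc (by omega)
    have e2 : asc (n+1) (n-k) n = asc (n+1) (n-k) (n-1) * σ (n+1) n := by
      have := asc_snoc (n := n+1) (a := n-k) (b := n-1) (by omega)
      rwa [show n - 1 + 1 = n from by omega] at this
    rw [e1, e2]
    calc asc (n+1) (n-k) (n-1) * (σ (n+1) (n+1) * σ (n+1) n * σ (n+1) (n+1))
        = asc (n+1) (n-k) (n-1) * (σ (n+1) n * σ (n+1) (n+1) * σ (n+1) n) := by rw [← hb]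
      _ = asc (n+1) (n-k) (n-1) * σ (n+1) n * σ (n+1) (n+1) * σ (n+1) n := by group
  have hDP : DeltaPrime n
      = ((List.range n).map (fun k => asc (n+1) (n-k) (n+1))).prod * asc (n+1) 1 n := by
    rw [DeltaPrime, hterm, T1 n n (by omega) le_rfl, show n - n + 1 = 1 from by omega]
  set P := ((List.range n).map (fun k => asc (n+1) (n-k) (n+1))).prod with hP
  have hD : Delta (n+1) = σ (n+1) (n+1) * P := by
    rw [Delta, List.range_succ_eq_map, List.map_cons, List.prod_cons, List.map_map]
    congr 1
    · rw [Nat.sub_zero, asc_single]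
    · rw [hP]
      refine congrArg List.prod ?_
      refine List.map_congr_left fun k _ => ?_
      simp [Function.comp, Nat.succ_sub_succ]
  rw [hDP, hD, mul_assoc, ← mul_assoc (σ (n+1) (n+1)) P, T2 n n le_rfl,
    show n + 1 - n = 1 from by omega, mul_assoc, ← asc_cons (show 1 ≤ n by omega)]
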